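/- Let B ⊆ ℝ^d be Lebesgue-measurable with 0 < vol(B) < ∞, let f be a probability density function with p = ∫_B f > 0 and g = p/vol(B). Suppose there is a measurable set P ⊆ B with vol(P) = w containing the above-average region {x ∈ B : f(x) ≥ g}, and a constant H ≥ g with f(x) ≤ H for all x ∈ P. Then ∫_B f(x) log₂(f(x)/g) dx ≤ w · H · log₂(H/g). -/

import Mathlib

open MeasureTheory Real

/-- One-peak-per-bin height–width upper bound on the per-bin
contribution to the KL divergence. -/
theorem one_peak_per_bin_bound
    {d : ℕ}
    (B : Set (Fin d → ℝ)) (hBmeas : MeasurableSet B)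
    (hBpos : 0 < volume B) (hBfin : volume B < ⊤)
    (f : (Fin d → ℝ) → ℝ)
    (hf_meas : Measurable f)
    (hf_nonneg : ∀ x, 0 ≤ f x)
    (hf_int : ∫ x, f x = 1)
    (p : ℝ) (hp : p = ∫ x in B, f x) (hppos : 0 < p)
    (g : ℝ) (hg : g = p / (volume B).toReal)
    (P : Set (Fin d → ℝ)) (hPmeas : MeasurableSet P) (hPB : P ⊆ B)
    (w : ℝ) (hw : w = (volume P).toReal)
    (habove : {x ∈ B | g ≤ f x} ⊆ P)
    (H : ℝ) (hHg : g ≤ H) (hH : ∀ x ∈ P, f x ≤ H) :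
    ∫ x in B, f x * Real.logb 2 (f x / g) ≤ w * H * Real.logb 2 (H / g) := by
  have hvol : 0 < (volume B).toReal := ENNReal.toReal_pos hBpos.ne' hBfin.ne
  have hgpos : 0 < g := by rw [hg]; exact div_pos hppos hvol
  have hHpos : 0 < H := lt_of_lt_of_le hgpos hHg
  have hlog2 : 0 < Real.log 2 := Real.log_pos one_lt_two
  have hCnn : 0 ≤ H * Real.logb 2 (H / g) :=
    mul_nonneg hHpos.le (Real.logb_nonneg one_lt_two ((one_le_div hgpos).2 hHg))
  set C := H * Real.logb 2 (H / g) with hC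
  have hfleH : ∀ x ∈ B, f x ≤ H := by
    intro x hx
    by_cases hxP : x ∈ P
    · exact hH x hxP
    · have : ¬ g ≤ f x := fun h => hxP (habove ⟨hx, h⟩)
      linarith
  have hub : ∀ x ∈ B, f x * Real.logb 2 (f x / g) ≤ C := by
    intro x hx
    rcases le_or_gt (Real.logb 2 (f x / g)) 0 with h | h
    · exact le_trans (mul_nonpos_of_nonneg_of_nonpos (hf_nonneg x) h) hCnn
    · have ht : 0 ≤ f x / g := div_nonneg (hf_nonneg x) hgpos.le
      have ht' : 0 < f x / g := by
        rcases ht.lt_or_eq with h' | h'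
        · exact h'
        · rw [← h', Real.logb_zero] at h; exact absurd h (lt_irrefl 0)
      have h1 : Real.logb 2 (f x / g) ≤ Real.logb 2 (H / g) :=
        Real.logb_le_logb_of_le one_lt_two ht' (by gcongr; exact hfleH x hx)
      calc f x * Real.logb 2 (f x / g) ≤ H * Real.logb 2 (f x / g) :=
            mul_le_mul_of_nonneg_right (hfleH x hx) h.le
        _ ≤ C := by rw [hC]; exact mul_le_mul_of_nonneg_left h1 hHpos.le
  have hlb : ∀ x ∈ B, -(g / Real.log 2) ≤ f x * Real.logb 2 (f x / g) := by
    intro x _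
    rcases (hf_nonneg x).lt_or_eq with hfx | hfx
    · have h1 : Real.log (g / f x) ≤ g / f x - 1 :=
        Real.log_le_sub_one_of_pos (div_pos hgpos hfx)
      have h2 : Real.log (f x / g) = - Real.log (g / f x) := by
        rw [← Real.log_inv]
        congr 1
        field_simp
      have h3 : f x * (g / f x - 1) = g - f x := by field_simp
      have key : -g ≤ f x * Real.log (f x / g) := by
        rw [h2]
        have := mul_le_mul_of_nonneg_left h1 hfx.le
        nlinarith [hf_nonneg x]
      have : f x * Real.logb 2 (f x / g) = (f x * Real.log (f x / g)) / Real.log 2 := by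
        rw [Real.logb]; ring
      rw [this, show -(g / Real.log 2) = -g / Real.log 2 from (neg_div _ _).symm]
      exact (div_le_div_iff_of_pos_right hlog2).2 key
    · rw [← hfx]
      simp
      positivity
  have hmeas_phi : Measurable fun x => f x * Real.logb 2 (f x / g) := by
    apply hf_meas.mul
    have : (fun x => Real.logb 2 (f x / g)) =
        fun x => Real.log (f x / g) / Real.log 2 := rfl
    rw [this]
    exact (Real.measurable_log.comp (hf_meas.div_const g)).div_const _
  have hglog : 0 ≤ g / Real.log 2 := div_nonneg hgpos.le hlog2.le
  have hconst1 : IntegrableOn (fun _ => g / Real.log 2 + C) B volume :=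
    integrableOn_const hBfin.ne
  have hconst2 : IntegrableOn (fun _ => C) B volume :=
    integrableOn_const hBfin.ne
  have hint : IntegrableOn (fun x => f x * Real.logb 2 (f x / g)) B := by
    refine hconst1.mono' hmeas_phi.aestronglyMeasurable ?_
    refine (ae_restrict_iff' hBmeas).2 (ae_of_all _ fun x hx => ?_)
    rw [Real.norm_eq_abs, abs_le]
    constructor
    · have := hlb x hx; linarith
    · have := hub x hx; linarith
  have hint2 : IntegrableOn (P.indicator fun _ => C) B :=
    hconst2.indicator hPmeas
  have hbound : ∀ x ∈ B, f x * Real.logb 2 (f x / g) ≤ P.indicator (fun _ => C) x := by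
    intro x hx
    by_cases hxP : x ∈ P
    · rw [Set.indicator_of_mem hxP]
      exact hub x hx
    · rw [Set.indicator_of_notMem hxP]
      have hfx : f x < g := by
        by_contra h
        exact hxP (habove ⟨hx, not_lt.1 h⟩)
      exact mul_nonpos_of_nonneg_of_nonpos (hf_nonneg x)
        (Real.logb_nonpos one_lt_two (div_nonneg (hf_nonneg x) hgpos.le)
          ((div_le_one hgpos).2 hfx.le))
  calc ∫ x in B, f x * Real.logb 2 (f x / g)
      ≤ ∫ x in B, P.indicator (fun _ => C) x :=
        setIntegral_mono_on hint hint2 hBmeas hbound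
    _ = ∫ _ in B ∩ P, C := setIntegral_indicator hPmeas
    _ = (volume (B ∩ P)).toReal * C := by
        rw [setIntegral_const, smul_eq_mul]; rfl
    _ = w * H * Real.logb 2 (H / g) := by
        rw [Set.inter_eq_self_of_subset_right hPB, ← hw, hC]; ring
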